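/- Let E and F be real Banach spaces, U ⊆ E open, and f : U → F a map which is analytic at every point of U. Suppose a ∈ U and the Fréchet derivative Df(a) : E → F is a topological linear isomorphism (a continuous linear bijection with continuous inverse). Then f is a local analytic isomorphism at a: there exist open neighborhoods V ⊆ U of a and W ⊆ F of f(a) such that f restricts to a bijection from V onto W whose inverse map W → V is analytic at every point of W. -/

import Mathlib

/-- analytic inverse function theorem, Douady: if `f : U → F` is
analytic at every point of the open set `U ⊆ E` and its Fréchet derivative at
`a ∈ U` is a topological linear isomorphism, then `f` is a local analytic
isomorphism at `a`. -/
theorem analytic_inverse_function_theorem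
    {E F : Type*} [NormedAddCommGroup E] [NormedSpace ℝ E] [CompleteSpace E]
    [NormedAddCommGroup F] [NormedSpace ℝ F] [CompleteSpace F]
    (U : Set E) (hU : IsOpen U) (f : E → F)
    (hf : ∀ x ∈ U, AnalyticAt ℝ f x)
    (a : E) (ha : a ∈ U)
    (hiso : ∃ L : E ≃L[ℝ] F, (L : E →L[ℝ] F) = fderiv ℝ f a) :
    ∃ (V : Set E) (W : Set F), IsOpen V ∧ IsOpen W ∧ a ∈ V ∧ V ⊆ U ∧ f a ∈ W ∧
      Set.BijOn f V W ∧
      ∃ g : F → E, Set.InvOn g f V W ∧ ∀ y ∈ W, AnalyticAt ℝ g y := by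
  obtain ⟨L, hL⟩ := hiso
  -- strict derivative at `a`
  have hca : ContDiffAt ℝ 1 f a := ((hf a ha).contDiffAt).of_le le_top
  have hsd : HasStrictFDerivAt f (L : E →L[ℝ] F) a := by
    rw [hL]; exact hca.hasStrictFDerivAt one_ne_zero
  -- the local homeomorphism given by the inverse function theorem
  set Φ := hsd.toOpenPartialHomeomorph f with hΦ
  have hΦcoe : (Φ : E → F) = f := hsd.toOpenPartialHomeomorph_coe
  -- the set where the derivative is invertible
  have hfd : AnalyticOnNhd ℝ (fderiv ℝ f) U := AnalyticOnNhd.fderiv_of_isOpen (fun x hx => hf x hx) hU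
  have hfdc : ContinuousOn (fderiv ℝ f) U := hfd.continuousOn
  set T : Set E := U ∩ (fderiv ℝ f) ⁻¹' (Set.range ((↑) : (E ≃L[ℝ] F) → E →L[ℝ] F)) with hT
  have hTopen : IsOpen T := hfdc.isOpen_inter_preimage hU ContinuousLinearEquiv.isOpen
  have haT : a ∈ T := ⟨ha, ⟨L, hL⟩⟩
  set Φ' := Φ.restrOpen T hTopen with hΦ'
  have hΦ'coe : (Φ' : E → F) = f := hΦcoe
  have hsrc : Φ'.source = Φ.source ∩ T := Φ.restrOpen_source T hTopen
  have haV : a ∈ Φ'.source := hsrc ▸ ⟨hsd.mem_toOpenPartialHomeomorph_source, haT⟩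
  refine ⟨Φ'.source, Φ'.target, Φ'.open_source, Φ'.open_target, haV, ?_, ?_, ?_, ?_⟩
  · intro x hx
    exact ((hsrc ▸ hx : x ∈ Φ.source ∩ T).2).1
  · have := Φ'.map_source haV
    rwa [show Φ' a = f a from congrFun hΦ'coe a] at this
  · have := Φ'.bijOn
    rwa [hΦ'coe] at this
  · refine ⟨Φ'.symm, ?_, ?_⟩
    · have := Φ'.invOn
      rwa [hΦ'coe] at this
    · intro y hy
      have hxs : Φ'.symm y ∈ Φ'.source := Φ'.map_target hy
      have hxT : Φ'.symm y ∈ T := (hsrc ▸ hxs).2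
      obtain ⟨L', hL'⟩ := hxT.2
      have hfa : AnalyticAt ℝ f (Φ'.symm y) := hf _ hxT.1
      have : AnalyticAt ℝ (Φ' : E → F) (Φ'.symm y) := by rwa [hΦ'coe]
      exact Φ'.analyticAt_symm hy this (by rw [hΦ'coe, ← hL'] : fderiv ℝ (Φ' : E → F) (Φ'.symm y) = L')
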